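/- A 4-algebra E is metabelian (i.e. (a·b)·(c·d) = 0 for all a,b,c,d ∈ E) if and only if E is isomorphic to an algebra of the form V × A, where A and V are vector spaces, ▷ : A × V → V and f : A × A → V are bilinear maps with f symmetric, and the multiplication is (x,a)∘(y,b) = (a▷y + b▷x + f(a,b), 0); moreover any such algebra V × A is automatically a 4-algebra. -/
import Mathlib


structure FourAlgebra (k : Type*) (A : Type*) [Field k] [AddCommGroup A] [Module k A] where
  mul : A →ₗ[k] A →ₗ[k] A
  comm : ∀ a b : A, mul a b = mul b a
  four : ∀ a : A, mul (mul a a) (mul a a) = 0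

/-- A 4-algebra E is metabelian iff it is isomorphic to an algebra V × A with
multiplication (x,a)∘(y,b) = (a▷y + b▷x + f(a,b), 0) for vector spaces V, A and bilinear
maps ▷ : A × V → V, f : A × A → V with f symmetric; moreover every such algebra V × A is
automatically a 4-algebra. -/
theorem stmt19 (k : Type) [Field k] (h2 : (2 : k) ≠ 0)
    (E : Type) [AddCommGroup E] [Module k E] (FE : FourAlgebra k E) :
    ((∀ a b c d : E, FE.mul (FE.mul a b) (FE.mul c d) = 0) ↔
      (∃ (V A : Type) (_ : AddCommGroup V) (_ : Module k V)
         (_ : AddCommGroup A) (_ : Module k A)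
         (tr : A →ₗ[k] V →ₗ[k] V) (f : A →ₗ[k] A →ₗ[k] V),
        (∀ a b : A, f a b = f b a) ∧
        ∃ φ : (V × A) ≃ₗ[k] E,
          ∀ z w : V × A,
            φ (tr z.2 w.1 + tr w.2 z.1 + f z.2 w.2, 0) = FE.mul (φ z) (φ w))) ∧
    -- every such algebra is a 4-algebra:
    (∀ (V A : Type) (_ : AddCommGroup V) (_ : Module k V)
       (_ : AddCommGroup A) (_ : Module k A)
       (tr : A →ₗ[k] V →ₗ[k] V) (f : A →ₗ[k] A →ₗ[k] V),
      (∀ a b : A, f a b = f b a) →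
      (let p : V × A → V × A → V × A := fun z w =>
          (tr z.2 w.1 + tr w.2 z.1 + f z.2 w.2, 0)
       (∀ z w, p z w = p w z) ∧ (∀ z, p (p z z) (p z z) = 0))) := by
  constructor
  · constructor
    · -- metabelian → structure
      intro hmet
      set s : Set E := {x | ∃ a b, FE.mul a b = x} with hs
      set W : Submodule k E := Submodule.span k s with hWdef
      have hmemW : ∀ a b : E, FE.mul a b ∈ W := fun a b =>
        Submodule.subset_span ⟨a, b, rfl⟩
      -- mul vanishes on W × W
      have hWW : ∀ x ∈ W, ∀ y ∈ W, FE.mul x y = 0 := by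
        intro x hx y hy
        induction hx, hy using Submodule.span_induction₂ with
        | mem_mem x y hx hy =>
          obtain ⟨a, b, rfl⟩ := hx; obtain ⟨c, d, rfl⟩ := hy
          exact hmet a b c d
        | zero_left y hy => simp
        | zero_right x hx => simp
        | add_left x y z _ _ _ h1 h2 => simp [map_add, LinearMap.add_apply, h1, h2]
        | add_right x y z _ _ _ h1 h2 => simp [map_add, h1, h2]
        | smul_left r x y _ _ h => simp [map_smul, LinearMap.smul_apply, h]
        | smul_right r x y _ _ h => simp [map_smul, h]
      -- bilinear map into W
      let g : E →ₗ[k] E →ₗ[k] W := LinearMap.mk₂ k (fun a b => ⟨FE.mul a b, hmemW a b⟩)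
        (fun a a' b => by ext; simp)
        (fun c a b => by ext; simp)
        (fun a b b' => by ext; simp)
        (fun c a b => by ext; simp)
      obtain ⟨A, hA⟩ := Submodule.exists_isCompl W
      refine ⟨W, A, inferInstance, inferInstance, inferInstance, inferInstance,
        (g.comp A.subtype).compl₂ W.subtype, (g.comp A.subtype).compl₂ A.subtype,
        fun a b => by ext; simp [g, FE.comm], Submodule.prodEquivOfIsCompl W A hA, ?_⟩
      rintro ⟨x, a⟩ ⟨y, b⟩
      simp only [Submodule.coe_prodEquivOfIsCompl']
      push_cast
      simp only [g, LinearMap.compl₂_apply, LinearMap.comp_apply, Submodule.coe_subtype,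
        LinearMap.mk₂_apply]
      have h1 : FE.mul ((x : E) + a) ((y : E) + b)
          = FE.mul (x : E) (y : E) + FE.mul (x : E) (b : E)
            + FE.mul (a : E) (y : E) + FE.mul (a : E) (b : E) := by
        simp [map_add, LinearMap.add_apply]; abel
      rw [h1, hWW x x.2 y y.2, FE.comm (x : E) (b : E)]
      abel
    · -- structure → metabelian
      rintro ⟨V, A, _, _, _, _, tr, f, hf, φ, hφ⟩ a b c d
      have key : ∀ u v : E, ∃ x : V, FE.mul u v = φ (x, 0) := by
        intro u v
        obtain ⟨z, rfl⟩ := φ.surjective u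
        obtain ⟨w, rfl⟩ := φ.surjective v
        exact ⟨_, (hφ z w).symm⟩
      obtain ⟨x, hx⟩ := key a b
      obtain ⟨y, hy⟩ := key c d
      rw [hx, hy, ← hφ (x, 0) (y, 0)]
      simp
  · -- every such algebra is a 4-algebra
    intro V A _ _ _ _ tr f hf
    dsimp only
    constructor
    · intro z w
      simp only [Prod.mk.injEq]
      exact ⟨by rw [hf z.2 w.2]; abel, trivial⟩
    · intro z
      simp
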